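/- With C = ∂R(0), Ĉ_sh = C ∩ Ẑ* as above, and assuming every restriction v ↦ R(χ(w,v)) is coercive, the following are equivalent: (i) for every z̃ ∈ Z there is a unique minimizer x̃ of R on the affine set {x : σ(x) = z̃}; (ii) for every ξ ∈ Ĉ_sh and every x₁, x₂ in the normal cone N_C(ξ), σ(x₁) = σ(x₂) implies x₁ = x₂. -/

import Mathlib

/-- Hahn–Banach support lemma: a nonnegative sublinear function admits a supporting
continuous linear functional at every point. -/
lemma sublinear_support {E : Type*} [NormedAddCommGroup E] [NormedSpace ℝ E]
    [FiniteDimensional ℝ E] (N : E → ℝ) (h0 : ∀ x, 0 ≤ N x)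
    (hadd : ∀ a b, N (a + b) ≤ N a + N b)
    (hhom : ∀ c : ℝ, 0 ≤ c → ∀ x, N (c • x) = c * N x) (x₀ : E) :
    ∃ ξ : E →L[ℝ] ℝ, (∀ y, ξ y ≤ N y) ∧ ξ x₀ = N x₀ := by
  have hN0 : N 0 = 0 := by simpa using hhom 0 le_rfl 0
  by_cases hx : x₀ = 0
  · exact ⟨0, fun y => h0 y, by simp [hx, hN0]⟩
  · set f : E →ₗ.[ℝ] ℝ := LinearPMap.mkSpanSingleton (K := ℝ) x₀ (N x₀) hx with hfdef
    have hfle : ∀ t : f.domain, f t ≤ N t := by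
      rintro ⟨t, ht⟩
      rcases Submodule.mem_span_singleton.mp ht with ⟨c, rfl⟩
      have happ : f ⟨c • x₀, ht⟩ = c • N x₀ :=
        LinearPMap.mkSpanSingleton'_apply x₀ (N x₀) _ c ht
      rw [happ]
      rcases le_or_gt 0 c with hc | hc
      · rw [smul_eq_mul, ← hhom c hc x₀]
      · have h1 : c * N x₀ ≤ 0 := mul_nonpos_of_nonpos_of_nonneg hc.le (h0 x₀)
        have h2 : (0 : ℝ) ≤ N (c • x₀) := h0 _
        simpa [smul_eq_mul] using h1.trans h2
    obtain ⟨g, hg1, hg2⟩ := exists_extension_of_le_sublinear f N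
      (fun c hc x => hhom c hc.le x) hadd hfle
    refine ⟨LinearMap.toContinuousLinearMap g, fun y => hg2 y, ?_⟩
    have hmem : x₀ ∈ f.domain := Submodule.mem_span_singleton_self x₀
    have := hg1 ⟨x₀, hmem⟩
    have happ : f ⟨x₀, hmem⟩ = N x₀ := LinearPMap.mkSpanSingleton_apply ℝ ℝ hx (N x₀)
    simpa [happ] using this

/-- Equivalence between the uniqueness condition (*) (unique minimizer of `R` on each
fiber of the shape map) and injectivity of `σ` on normal cones `N_C(ξ)` at points
`ξ ∈ Ĉ_sh = C ∩ Ẑ*`. -/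
theorem stmt7 {Z Y X : Type*}
    [NormedAddCommGroup Z] [NormedSpace ℝ Z] [FiniteDimensional ℝ Z]
    [NormedAddCommGroup Y] [NormedSpace ℝ Y] [FiniteDimensional ℝ Y]
    [NormedAddCommGroup X] [NormedSpace ℝ X] [FiniteDimensional ℝ X]
    (χ : (Z × Y) ≃L[ℝ] X)
    (R : X → ℝ) (hR0 : ∀ x, 0 ≤ R x)
    (hconv : ConvexOn ℝ Set.univ R)
    (hcont : Continuous R)
    (hhom : ∀ c : ℝ, 0 ≤ c → ∀ x, R (c • x) = c * R x)
    (σ : X → Z) (hσ : ∀ x, σ x = (χ.symm x).1)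
    (hcoer : ∀ w : Z,
      Filter.Tendsto (fun v : Y => R (χ (w, v))) (Filter.cocompact Y) Filter.atTop) :
    (∀ z : Z, ∃! x : X, σ x = z ∧ ∀ x' : X, σ x' = z → R x ≤ R x') ↔
    (∀ ξ : X →L[ℝ] ℝ,
      (∀ x, ξ x ≤ R x) →
      (∀ x₁ x₂ : X, σ x₁ = σ x₂ → ξ x₁ = ξ x₂) →
      ∀ x₁ x₂ : X,
        (∀ ξ' : X →L[ℝ] ℝ, (∀ x, ξ' x ≤ R x) → ξ' x₁ - ξ x₁ ≤ 0) →
        (∀ ξ' : X →L[ℝ] ℝ, (∀ x, ξ' x ≤ R x) → ξ' x₂ - ξ x₂ ≤ 0) →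
        σ x₁ = σ x₂ → x₁ = x₂) := by
  -- basic facts
  have hR00 : R 0 = 0 := by simpa using hhom 0 le_rfl 0
  have hRadd : ∀ a b : X, R (a + b) ≤ R a + R b := by
    intro a b
    have h := hconv.2 (Set.mem_univ a) (Set.mem_univ b)
      (by norm_num : (0:ℝ) ≤ 1/2) (by norm_num : (0:ℝ) ≤ 1/2) (by norm_num)
    have h2 : R (a + b) = 2 * R ((1/2 : ℝ) • a + (1/2 : ℝ) • b) := by
      rw [← hhom 2 (by norm_num)]
      congr 1
      rw [smul_add, smul_smul, smul_smul]
      norm_num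
    rw [h2]
    rw [smul_eq_mul, smul_eq_mul] at h
    linarith
  -- σ as a continuous linear map
  set σL : X →L[ℝ] Z :=
    (ContinuousLinearMap.fst ℝ Z Y).comp (χ.symm : X →L[ℝ] Z × Y) with hσLdef
  have hσL : ∀ x, σ x = σL x := fun x => by rw [hσ]; rfl
  have hσχ : ∀ (z : Z) (v : Y), σ (χ (z, v)) = z := by
    intro z v; rw [hσ, χ.symm_apply_apply]
  have hχσ : ∀ x : X, χ (σ x, (χ.symm x).2) = x := by
    intro x
    rw [hσ]
    have : ((χ.symm x).1, (χ.symm x).2) = χ.symm x := rfl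
    rw [this, χ.apply_symm_apply]
  -- existence of minimizers on each fiber
  have hmin : ∀ z : Z, ∃ v : Y, ∀ v', R (χ (z, v)) ≤ R (χ (z, v')) := by
    intro z
    have hc : Continuous fun v : Y => R (χ (z, v)) :=
      hcont.comp (χ.continuous.comp (Continuous.prodMk_right z))
    exact hc.exists_forall_le (hcoer z)
  -- Key: any minimizer on its fiber has a shape-invariant supporting functional
  have key : ∀ xs : X, (∀ x', σ x' = σ xs → R xs ≤ R x') →
      ∃ ξ : X →L[ℝ] ℝ, (∀ x, ξ x ≤ R x) ∧
        (∀ x₁ x₂, σ x₁ = σ x₂ → ξ x₁ = ξ x₂) ∧ ξ xs = R xs := by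
    intro xs hxs
    set vmin : Z → Y := fun z => (hmin z).choose with hvdef
    have hQle : ∀ z v, R (χ (z, vmin z)) ≤ R (χ (z, v)) := fun z => (hmin z).choose_spec
    set Q : Z → ℝ := fun z => R (χ (z, vmin z)) with hQdef
    have hQ0 : ∀ z, 0 ≤ Q z := fun z => hR0 _
    have hQadd : ∀ a b, Q (a + b) ≤ Q a + Q b := by
      intro a b
      calc Q (a + b) ≤ R (χ (a + b, vmin a + vmin b)) := hQle _ _
        _ = R (χ (a, vmin a) + χ (b, vmin b)) := by
            rw [← map_add, Prod.mk_add_mk]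
        _ ≤ Q a + Q b := hRadd _ _
    have hQhom : ∀ c : ℝ, 0 ≤ c → ∀ z, Q (c • z) = c * Q z := by
      intro c hc z
      rcases eq_or_lt_of_le hc with hc0 | hc0
      · have h1 : Q ((0:ℝ) • z) ≤ R (χ ((0:ℝ) • z, (0:ℝ) • vmin z)) := hQle _ _
        have h2 : R (χ ((0:ℝ) • z, (0:ℝ) • vmin z)) = 0 := by
          have : ((0:ℝ) • z, (0:ℝ) • vmin z) = (0:ℝ) • (z, vmin z) := rfl
          rw [this, map_smul, hhom 0 le_rfl]
          ring
        rw [← hc0]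
        have := le_antisymm (h2 ▸ h1) (hQ0 _)
        rw [this]; ring
      · apply le_antisymm
        · calc Q (c • z) ≤ R (χ (c • z, c • vmin z)) := hQle _ _
            _ = c * Q z := by
                have : (c • z, c • vmin z) = c • ((z, vmin z) : Z × Y) := rfl
                rw [this, map_smul, hhom c hc]
        · have h1 : Q z ≤ R (χ (z, c⁻¹ • vmin (c • z))) := hQle _ _
          have h2 : c * R (χ (z, c⁻¹ • vmin (c • z))) = Q (c • z) := by
            rw [← hhom c hc, ← map_smul]
            congr 2
            have : c • ((z, c⁻¹ • vmin (c • z)) : Z × Y)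
                = (c • z, c • c⁻¹ • vmin (c • z)) := rfl
            rw [this, smul_smul, mul_inv_cancel₀ hc0.ne', one_smul]
          calc c * Q z ≤ c * R (χ (z, c⁻¹ • vmin (c • z))) := by
                exact mul_le_mul_of_nonneg_left h1 hc
            _ = Q (c • z) := h2
    obtain ⟨η, hη1, hη2⟩ := sublinear_support Q hQ0 hQadd hQhom (σ xs)
    refine ⟨η.comp σL, ?_, ?_, ?_⟩
    · intro x
      have h1 : (η.comp σL) x = η (σ x) := by rw [hσL x]; rfl
      have h2 : Q (σ x) ≤ R x := by
        have := hQle (σ x) (χ.symm x).2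
        rwa [hχσ x] at this
      calc (η.comp σL) x = η (σ x) := h1
        _ ≤ Q (σ x) := hη1 _
        _ ≤ R x := h2
    · intro x₁ x₂ h
      show η (σL x₁) = η (σL x₂)
      rw [← hσL, ← hσL, h]
    · have h1 : (η.comp σL) xs = η (σ xs) := by rw [hσL xs]; rfl
      have hQxs : Q (σ xs) = R xs := by
        apply le_antisymm
        · have := hQle (σ xs) (χ.symm xs).2
          rwa [hχσ xs] at this
        · exact hxs _ (hσχ _ _)
      rw [h1, hη2, hQxs]
  constructor
  · -- (i) → (ii)
    intro hi ξ hξC hξsh x₁ x₂ hn1 hn2 hσeq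
    have hval : ∀ x : X,
        (∀ ξ' : X →L[ℝ] ℝ, (∀ y, ξ' y ≤ R y) → ξ' x - ξ x ≤ 0) → ξ x = R x := by
      intro x hn
      obtain ⟨ξ', h1, h2⟩ := sublinear_support R hR0 hRadd hhom x
      have h3 := hn ξ' h1
      have h4 := hξC x
      linarith
    have hv1 : ξ x₁ = R x₁ := hval x₁ hn1
    have hv2 : ξ x₂ = R x₂ := hval x₂ hn2
    have hmin1 : ∀ x', σ x' = σ x₁ → R x₁ ≤ R x' := by
      intro x' h
      have he : ξ x' = ξ x₁ := hξsh x' x₁ h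
      calc R x₁ = ξ x₁ := hv1.symm
        _ = ξ x' := he.symm
        _ ≤ R x' := hξC x'
    have hmin2 : ∀ x', σ x' = σ x₁ → R x₂ ≤ R x' := by
      intro x' h
      have he : ξ x' = ξ x₂ := hξsh x' x₂ (h.trans hσeq)
      calc R x₂ = ξ x₂ := hv2.symm
        _ = ξ x' := he.symm
        _ ≤ R x' := hξC x'
    obtain ⟨xt, _, huniq⟩ := hi (σ x₁)
    rw [huniq x₁ ⟨rfl, hmin1⟩, huniq x₂ ⟨hσeq.symm, hmin2⟩]
  · -- (ii) → (i)
    intro hii z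
    obtain ⟨v₀, hv₀⟩ := hmin z
    set xt : X := χ (z, v₀) with hxtdef
    have hσxt : σ xt = z := hσχ z v₀
    have hfib : ∀ x', σ x' = z → R xt ≤ R x' := by
      intro x' h
      have hx' : χ (z, (χ.symm x').2) = x' := by rw [← h]; exact hχσ x'
      calc R xt ≤ R (χ (z, (χ.symm x').2)) := hv₀ _
        _ = R x' := by rw [hx']
    refine ⟨xt, ⟨hσxt, hfib⟩, ?_⟩
    rintro x' ⟨hσ', hmin'⟩
    have hR' : R x' = R xt := le_antisymm (hmin' xt hσxt) (hfib x' hσ')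
    set xm : X := (2⁻¹ : ℝ) • x' + (2⁻¹ : ℝ) • xt with hxmdef
    have hσxm : σ xm = z := by
      rw [hσL]
      have : σL xm = (2⁻¹ : ℝ) • σL x' + (2⁻¹ : ℝ) • σL xt := by
        rw [hxmdef, map_add, map_smul, map_smul]
      rw [this, ← hσL, ← hσL, hσ', hσxt]
      module
    have hRxm : R xm = R x' := by
      apply le_antisymm
      · have h := hconv.2 (Set.mem_univ x') (Set.mem_univ xt)
          (by norm_num : (0:ℝ) ≤ 2⁻¹) (by norm_num : (0:ℝ) ≤ 2⁻¹) (by norm_num)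
        rw [smul_eq_mul, smul_eq_mul] at h
        rw [hxmdef]
        calc R ((2⁻¹:ℝ) • x' + (2⁻¹:ℝ) • xt) ≤ 2⁻¹ * R x' + 2⁻¹ * R xt := h
          _ = R x' := by rw [hR']; ring
      · exact hmin' xm hσxm
    have hxmmin : ∀ y, σ y = σ xm → R xm ≤ R y := by
      intro y hy
      rw [hσxm] at hy
      rw [hRxm]
      exact hmin' y hy
    obtain ⟨ξ, hξC, hξsh, hξxm⟩ := key xm hxmmin
    have hξx' : ξ x' = R x' := by
      have : ξ x' = ξ xm := hξsh x' xm (hσ'.trans hσxm.symm)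
      rw [this, hξxm, hRxm]
    have hξxt : ξ xt = R xt := by
      have : ξ xt = ξ xm := hξsh xt xm (hσxt.trans hσxm.symm)
      rw [this, hξxm, hRxm, hR']
    have := hii ξ hξC hξsh x' xt
      (fun ξ' hξ' => by have := hξ' x'; linarith [hξx'])
      (fun ξ' hξ' => by have := hξ' xt; linarith [hξxt])
      (hσ'.trans hσxt.symm)
    exact this
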